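/- Let (R, m) be a Henselian local ring with finite residue field of cardinality q and π(x) any π-polynomial. If Z(m) is generated as an ideal of R[x] by F₁(x), ..., Fₙ(x), then Z(R) is generated by F₁(π(x)), ..., Fₙ(π(x)). -/

import Mathlib

open Polynomial IsLocalRing

/-- The ideal of polynomials in `R[X]` mapping every element of `S` into the ideal `I`. -/
def zeroFunctionsInto {R : Type*} [CommRing R] (S : Set R) (I : Ideal R) : Ideal R[X] where
  carrier := {f | ∀ s ∈ S, f.eval s ∈ I}
  add_mem' := fun hf hg s hs => by simpa using I.add_mem (hf s hs) (hg s hs)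
  zero_mem' := fun s _ => by simp
  smul_mem' := fun c f hf s hs => by simpa using I.mul_mem_left (c.eval s) (hf s hs)

/-- The ideal of polynomials vanishing on the subset `S`. -/
def zeroFunctions {R : Type*} [CommRing R] (S : Set R) : Ideal R[X] :=
  zeroFunctionsInto S ⊥

theorem mem_zeroFunctions_iff {R : Type*} [CommRing R] {S : Set R} {f : R[X]} :
    f ∈ zeroFunctions S ↔ ∀ s ∈ S, f.eval s = 0 := by
  constructor
  · intro h s hs; simpa using h s hs
  · intro h s hs; simpa using h s hs
open Polynomial IsLocalRing

section Aux

variable {R : Type*} [CommRing R] [HenselianLocalRing R]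

theorem aux_isUnit_of_residue_ne_zero {x : R} (h : residue R x ≠ 0) : IsUnit x := by
  by_contra hx
  exact h (Ideal.Quotient.eq_zero_iff_mem.2 ((mem_maximalIdeal x).2 (mem_nonunits_iff.2 hx)))

variable {q : ℕ} {c : Fin q → R}

/-- π maps R into the maximal ideal. -/
theorem aux_pi_mem (hc : Function.Bijective (fun i => residue R (c i))) (r : R) :
    (∏ i, (X - C (c i))).eval r ∈ maximalIdeal R := by
  obtain ⟨i, hi⟩ := hc.surjective (residue R r)
  have hmem : r - c i ∈ maximalIdeal R := by
    rw [← Ideal.Quotient.eq_zero_iff_mem]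
    show residue R (r - c i) = 0
    rw [map_sub, ← hi, sub_self]
  obtain ⟨k, hk⟩ := Finset.dvd_prod_of_mem (fun j => r - c j) (Finset.mem_univ i)
  rw [eval_prod]
  simp only [eval_sub, eval_X, eval_C]
  rw [hk]
  exact Ideal.mul_mem_right _ _ hmem

/-- Hensel lifting: every t in m is π(r) for some r ≡ c i mod m. -/
theorem aux_pi_surj (hc : Function.Bijective (fun i => residue R (c i)))
    (i : Fin q) {t : R} (ht : t ∈ maximalIdeal R) :
    ∃ r : R, (∏ j, (X - C (c j))).eval r = t ∧ r - c i ∈ maximalIdeal R := by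
  set π : R[X] := ∏ j, (X - C (c j)) with hπ
  have hqpos : 0 < q := i.pos
  have hmonic : π.Monic := monic_prod_of_monic _ _ fun j _ => monic_X_sub_C _
  have hdeg : π.natDegree = q := by
    rw [hπ, natDegree_prod_of_monic _ _ fun j _ => monic_X_sub_C _]
    simp
  have hfm : (π - C t).Monic := by
    apply hmonic.sub_of_left
    calc (C t).degree ≤ 0 := degree_C_le
    _ < π.degree := by
        rw [degree_eq_natDegree hmonic.ne_zero, hdeg]
        exact_mod_cast hqpos
  have hevalπ : π.eval (c i) = 0 := by
    rw [hπ, eval_prod]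
    exact Finset.prod_eq_zero (Finset.mem_univ i) (by simp)
  have heval : (π - C t).eval (c i) ∈ maximalIdeal R := by
    rw [eval_sub, hevalπ, eval_C, zero_sub]
    exact neg_mem ht
  have hsplit : π = (X - C (c i)) * ∏ k ∈ Finset.univ.erase i, (X - C (c k)) :=
    (Finset.mul_prod_erase _ _ (Finset.mem_univ i)).symm
  have hder : ((π - C t).derivative.eval (c i)) =
      ∏ k ∈ Finset.univ.erase i, (c i - c k) := by
    rw [derivative_sub, derivative_C, sub_zero, hsplit, derivative_mul,
      derivative_X_sub_C]
    simp [eval_prod]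
  have hunit : IsUnit ((π - C t).derivative.eval (c i)) := by
    rw [hder]
    apply aux_isUnit_of_residue_ne_zero
    rw [map_prod]
    apply Finset.prod_ne_zero_iff.2
    intro k hk
    simp only [map_sub]
    intro h0
    have h1 : residue R (c k) = residue R (c i) := (sub_eq_zero.mp h0).symm
    exact (Finset.ne_of_mem_erase hk) (hc.injective h1)
  obtain ⟨a, ha, hmem⟩ := HenselianLocalRing.is_henselian (π - C t) hfm (c i) heval hunit
  refine ⟨a, ?_, hmem⟩
  have := ha
  simp only [IsRoot, eval_sub, eval_C, sub_eq_zero] at this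
  exact this

/-- π-adic expansion. -/
theorem aux_expand (hqpos : 0 < q) (f : R[X]) :
    ∃ g : Fin q → R[X], f = ∑ j, (g j).comp (∏ i, (X - C (c i))) * X ^ (j : ℕ) := by
  set π : R[X] := ∏ j, (X - C (c j)) with hπ
  have hmonic : π.Monic := monic_prod_of_monic _ _ fun j _ => monic_X_sub_C _
  have hdeg : π.natDegree = q := by
    rw [hπ, natDegree_prod_of_monic _ _ fun j _ => monic_X_sub_C _]; simp
  have key : ∀ N : ℕ, ∀ f : R[X], f.natDegree < N →
      ∃ g : Fin q → R[X], f = ∑ j, (g j).comp π * X ^ (j : ℕ) := by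
    intro N
    induction N with
    | zero => intro f hf; omega
    | succ N ih =>
      intro f hf
      by_cases hsmall : f.natDegree < q
      · refine ⟨fun j => C (f.coeff j), ?_⟩
        conv_lhs => rw [f.as_sum_range' q (lt_of_lt_of_le hsmall le_rfl)]
        rw [Finset.sum_range fun i => (monomial i) (f.coeff i)]
        refine Finset.sum_congr rfl fun j _ => ?_
        rw [C_comp, C_mul_X_pow_eq_monomial]
      · -- divide by π
        have hne : f ≠ 0 := by
          intro h; apply hsmall; rw [h]; simpa using hqpos
        have hdiv : f %ₘ π + π * (f /ₘ π) = f := modByMonic_add_div f π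
        have hdegq : (f /ₘ π).natDegree < N := by
          have h1 : (f /ₘ π).natDegree = f.natDegree - q := by
            rw [natDegree_divByMonic f hmonic, hdeg]
          omega
        obtain ⟨g', hg'⟩ := ih (f /ₘ π) hdegq
        have hr : (f %ₘ π).natDegree < q := by
          have := degree_modByMonic_lt f hmonic
          rcases eq_or_ne (f %ₘ π) 0 with h0 | h0
          · rw [h0]; simpa using hqpos
          · rw [degree_eq_natDegree h0, degree_eq_natDegree hmonic.ne_zero, hdeg] at this
            exact_mod_cast this
        refine ⟨fun j => X * g' j + C ((f %ₘ π).coeff j), ?_⟩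
        have expand : ∀ j : Fin q, (X * g' j + C ((f %ₘ π).coeff j)).comp π * X ^ (j:ℕ)
            = π * ((g' j).comp π * X ^ (j:ℕ)) + C ((f %ₘ π).coeff j) * X ^ (j:ℕ) := by
          intro j
          rw [add_comp, mul_comp, X_comp, C_comp]
          ring
        rw [Finset.sum_congr rfl fun j _ => expand j, Finset.sum_add_distrib,
          ← Finset.mul_sum, ← hg']
        have : (f %ₘ π) = ∑ j : Fin q, C ((f %ₘ π).coeff j) * X ^ (j:ℕ) := by
          conv_lhs => rw [(f %ₘ π).as_sum_range' q hr]
          rw [Finset.sum_range fun i => (monomial i) ((f %ₘ π).coeff i)]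
          exact Finset.sum_congr rfl fun j _ => (C_mul_X_pow_eq_monomial).symm
        rw [← this]
        conv_lhs => rw [← hdiv]
        ring
  exact key (f.natDegree + 1) f (Nat.lt_succ_self _)

end Aux
section Aux2
variable {R : Type*} [CommRing R] [HenselianLocalRing R] {q : ℕ} {c : Fin q → R}

theorem aux_isUnit_of_residue_ne_zero' {x : R} (h : residue R x ≠ 0) : IsUnit x := by
  by_contra hx
  exact h (Ideal.Quotient.eq_zero_iff_mem.2 ((mem_maximalIdeal x).2 (mem_nonunits_iff.2 hx)))

theorem aux_vandermonde (hc : Function.Bijective (fun i => residue R (c i)))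
    (r : Fin q → R) (hr : ∀ i, r i - c i ∈ maximalIdeal R)
    (v : Fin q → R) (hv : ∀ i, ∑ j : Fin q, r i ^ (j : ℕ) * v j = 0) : v = 0 := by
  have hres : ∀ i, residue R (r i) = residue R (c i) := by
    intro i
    have := Ideal.Quotient.eq_zero_iff_mem.2 (hr i)
    rw [map_sub] at this
    exact sub_eq_zero.mp this
  set M := Matrix.vandermonde r with hM
  have hdet : IsUnit M.det := by
    apply aux_isUnit_of_residue_ne_zero'
    rw [Matrix.det_vandermonde, map_prod]
    apply Finset.prod_ne_zero_iff.2
    intro i _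
    rw [map_prod]
    apply Finset.prod_ne_zero_iff.2
    intro j hj
    rw [map_sub, hres, hres, sub_ne_zero]
    intro h
    exact (Finset.mem_Ioi.mp hj).ne' (hc.injective h)
  have hmv : M.mulVec v = 0 := by
    funext i
    show ∑ j, M i j * v j = 0
    simpa [hM, Matrix.vandermonde] using hv i
  have : v = (M⁻¹ * M).mulVec v := by
    rw [Matrix.nonsing_inv_mul M hdet, Matrix.one_mulVec]
  rw [this, ← Matrix.mulVec_mulVec, hmv, Matrix.mulVec_zero]
end Aux2

theorem statement_16 {R : Type*} [CommRing R] [HenselianLocalRing R]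
    (q : ℕ) (c : Fin q → R) (hc : Function.Bijective (fun i => residue R (c i)))
    (n : ℕ) (F : Fin n → R[X])
    (hF : zeroFunctions (maximalIdeal R : Set R) = Ideal.span (Set.range F)) :
    zeroFunctions (Set.univ : Set R) =
      Ideal.span (Set.range fun i => (F i).comp (∏ i, (X - C (c i)))) := by
  set π : R[X] := ∏ i, (X - C (c i)) with hπ
  have hqpos : 0 < q := by
    obtain ⟨i, -⟩ := hc.surjective 0
    exact i.pos
  apply le_antisymm
  · -- hard direction
    intro f hf
    obtain ⟨g, hg⟩ := aux_expand (c := c) hqpos f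
    have hgm : ∀ j, g j ∈ zeroFunctions (maximalIdeal R : Set R) := by
      intro j
      rw [mem_zeroFunctions_iff]
      intro t ht
      -- Hensel roots
      have hroots : ∀ i : Fin q, ∃ r : R, π.eval r = t ∧ r - c i ∈ maximalIdeal R :=
        fun i => aux_pi_surj hc i ht
      choose r hr1 hr2 using hroots
      have hv : ∀ i, ∑ k : Fin q, r i ^ (k : ℕ) * ((g k).eval t) = 0 := by
        intro i
        have hfr : f.eval (r i) = 0 := by
          have := (mem_zeroFunctions_iff).mp hf (r i) (Set.mem_univ _)
          exact this
        calc ∑ k : Fin q, r i ^ (k : ℕ) * ((g k).eval t)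
            = f.eval (r i) := by
              rw [hg, eval_finset_sum]
              refine (Finset.sum_congr rfl fun k _ => ?_).symm
              rw [eval_mul, eval_pow, eval_X, eval_comp, hr1 i, mul_comm]
          _ = 0 := hfr
      have := aux_vandermonde hc r hr2 (fun k => (g k).eval t) hv
      exact congrFun this j
    rw [hg]
    apply Ideal.sum_mem
    intro j _
    apply Ideal.mul_mem_right
    -- (g j).comp π ∈ span
    have hmem : g j ∈ Ideal.span (Set.range F) := hF ▸ hgm j
    have hmap := Ideal.mem_map_of_mem (aeval π : R[X] →ₐ[R] R[X]).toRingHom hmem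
    rw [Ideal.map_span] at hmap
    have himg : (aeval π : R[X] →ₐ[R] R[X]).toRingHom '' Set.range F =
        Set.range fun i => (F i).comp π := by
      rw [← Set.range_comp]
      rfl
    rw [himg] at hmap
    exact hmap
  · rw [Ideal.span_le]
    rintro x ⟨i, rfl⟩
    rw [SetLike.mem_coe, mem_zeroFunctions_iff]
    intro s _
    rw [eval_comp]
    have hFi : F i ∈ zeroFunctions (maximalIdeal R : Set R) :=
      hF ▸ Ideal.subset_span ⟨i, rfl⟩
    exact (mem_zeroFunctions_iff).mp hFi _ (aux_pi_mem hc s)
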